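/- Let Γ₊ be the category of finite pointed sets and basepoint-preserving maps, and let T : Γ₊ → Ab be the functor assigning to a pointed set (S, *) the free abelian group ℤ[S ∖ {*}], with a pointed map f acting by [s] ↦ [f(s)] if f(s) ≠ * and [s] ↦ 0 otherwise. For n ≥ 0 let T^{⊗n} denote the pointwise tensor power over ℤ, T^{⊗n}(S) = T(S)^{⊗n}, with T^{⊗0} the constant functor with value ℤ. Then: (a) for all integers n > m ≥ 0, every natural transformation T^{⊗n} ⟹ T^{⊗m} is zero; (b) for every n ≥ 1, every natural transformation T^{⊗0} ⟹ T^{⊗n} is zero; and (c) every natural endomorphism of T is multiplication by a unique integer, so that the endomorphism ring of T in the functor category Fun(Γ₊, Ab) is ℤ. -/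

import Mathlib

/-!
STATEMENT 11: Let Γ₊ be the category of finite pointed sets and basepoint-preserving maps,
and let T : Γ₊ → Ab be the functor assigning to a pointed set (S, *) the free abelian group
ℤ[S ∖ {*}], with a pointed map f acting by [s] ↦ [f(s)] if f(s) ≠ * and [s] ↦ 0 otherwise.
For n ≥ 0 let T^{⊗n} denote the pointwise tensor power over ℤ (with T^{⊗0} the constant
functor ℤ). Then: (a) for all integers n > m ≥ 0, every natural transformation
T^{⊗n} ⟹ T^{⊗m} is zero; (b) for every n ≥ 1, every natural transformation T^{⊗0} ⟹ T^{⊗n}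
is zero; and (c) every natural endomorphism of T is multiplication by a unique integer, so
that the endomorphism ring of T in Fun(Γ₊, Ab) is ℤ.
-/

open CategoryTheory

attribute [local instance] Classical.propDecidable

/-- The category `Γ₊` of finite pointed sets and basepoint-preserving maps. -/
abbrev GammaPlus := ObjectProperty.FullSubcategory (fun X : Pointed.{0} => Finite X.X)

/-- The underlying abelian group of `T`: the free abelian group `ℤ[S ∖ {*}]`. -/
abbrev TObj (S : GammaPlus) : Type := FreeAbelianGroup { s : S.obj.X // s ≠ S.obj.point }

/-- The action of `T` on morphisms: `[s] ↦ [f(s)]` if `f(s) ≠ *`, and `[s] ↦ 0`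
otherwise. -/
noncomputable def TMap {S S' : GammaPlus} (f : S ⟶ S') : TObj S →+ TObj S' :=
  FreeAbelianGroup.lift fun s =>
    if h : f.hom.toFun s.val = S'.obj.point then 0 else FreeAbelianGroup.of ⟨f.hom.toFun s.val, h⟩

theorem TMap_id (S : GammaPlus) : TMap (𝟙 S) = AddMonoidHom.id (TObj S) := by
  apply FreeAbelianGroup.lift_ext
  intro s
  simp only [TMap, FreeAbelianGroup.lift_apply_of, AddMonoidHom.id_apply]
  exact dif_neg s.property

theorem TMap_comp {S S' S'' : GammaPlus} (f : S ⟶ S') (g : S' ⟶ S'') :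
    TMap (f ≫ g) = (TMap g).comp (TMap f) := by
  apply FreeAbelianGroup.lift_ext
  intro s
  simp only [TMap, FreeAbelianGroup.lift_apply_of, AddMonoidHom.comp_apply]
  by_cases h2 : f.hom.toFun s.val = S'.obj.point
  · have h1 : (f ≫ g).hom.toFun s.val = S''.obj.point := by
      show g.hom.toFun (f.hom.toFun s.val) = _
      rw [h2]; exact g.hom.map_point
    rw [dif_pos h1, dif_pos h2]
    simp
  · rw [dif_neg h2]
    by_cases h1 : (f ≫ g).hom.toFun s.val = S''.obj.point
    · rw [dif_pos h1]
      simp only [FreeAbelianGroup.lift_apply_of]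
      rw [dif_pos (show g.hom.toFun (f.hom.toFun s.val) = S''.obj.point from h1)]
    · rw [dif_neg h1]
      simp only [FreeAbelianGroup.lift_apply_of]
      rw [dif_neg (show ¬ g.hom.toFun (f.hom.toFun s.val) = S''.obj.point from h1)]
      rfl

/-- The functor `T : Γ₊ → Ab`. -/
noncomputable def TFunctor : GammaPlus ⥤ AddCommGrpCat.{0} where
  obj S := AddCommGrpCat.of (TObj S)
  map f := AddCommGrpCat.ofHom (TMap f)
  map_id S := congrArg AddCommGrpCat.ofHom (TMap_id S)
  map_comp f g := congrArg AddCommGrpCat.ofHom (TMap_comp f g)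

/-- The pointwise `n`-th tensor power of `T` over ℤ, at the level of objects:
`T^{⊗0} = ℤ` and `T^{⊗(n+1)} = T^{⊗n} ⊗ T`. -/
noncomputable def tpowGrp (S : GammaPlus) : ℕ → AddCommGrpCat.{0}
  | 0 => AddCommGrpCat.of ℤ
  | (n + 1) => AddCommGrpCat.of (TensorProduct ℤ (tpowGrp S n) (TObj S))

/-- The action of `T^{⊗n}` on morphisms. -/
noncomputable def tpowMap {S S' : GammaPlus} (f : S ⟶ S') :
    ∀ n, (tpowGrp S n : Type) →+ (tpowGrp S' n : Type)
  | 0 => AddMonoidHom.id ℤ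
  | (n + 1) =>
    (TensorProduct.map (tpowMap f n).toIntLinearMap (TMap f).toIntLinearMap).toAddMonoidHom

theorem tpowMap_id (S : GammaPlus) : ∀ n, tpowMap (𝟙 S) n = AddMonoidHom.id _
  | 0 => rfl
  | (n + 1) => by
    show (TensorProduct.map _ _).toAddMonoidHom = _
    rw [tpowMap_id S n, TMap_id]
    refine DFunLike.ext _ _ fun x => ?_
    refine TensorProduct.induction_on x rfl (fun a b => rfl) (fun a b ha hb => ?_)
    simp only [map_add, ha, hb]; exact (map_add _ a b).symm

theorem tpowMap_comp {S S' S'' : GammaPlus} (f : S ⟶ S') (g : S' ⟶ S'') :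
    ∀ n, tpowMap (f ≫ g) n = (tpowMap g n).comp (tpowMap f n)
  | 0 => rfl
  | (n + 1) => by
    show (TensorProduct.map _ _).toAddMonoidHom = _
    rw [tpowMap_comp f g n, TMap_comp]
    refine DFunLike.ext _ _ fun x => ?_
    refine TensorProduct.induction_on x rfl (fun a b => rfl) (fun a b ha hb => ?_)
    simp only [map_add, ha, hb]; exact (map_add _ a b).symm

/-- The pointwise `n`-th tensor power `T^{⊗n} : Γ₊ → Ab` of `T` over ℤ. -/
noncomputable def tpow (n : ℕ) : GammaPlus ⥤ AddCommGrpCat.{0} where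
  obj S := tpowGrp S n
  map f := AddCommGrpCat.ofHom (tpowMap f n)
  map_id S := congrArg AddCommGrpCat.ofHom (tpowMap_id S n)
  map_comp f g := congrArg AddCommGrpCat.ofHom (tpowMap_comp f g n)


/-! ### Auxiliary developments -/

/-- The non-basepoint elements. -/
abbrev Bset (S : GammaPlus) := {s : S.obj.X // s ≠ S.obj.point}

/-- Pure-tensor generators of `T^{⊗m}(S)` indexed by tuples. -/
noncomputable def elem (S : GammaPlus) : ∀ m, (Fin m → Bset S) → (tpowGrp S m : Type)
  | 0, _ => (1 : ℤ)
  | (m+1), t =>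
      (TensorProduct.tmul ℤ (elem S m (fun j => t j.succ)) (FreeAbelianGroup.of (t 0)) :
        TensorProduct ℤ (tpowGrp S m) (TObj S))

/-- The tuple equivalence used in `tequiv`. -/
def tupEquiv (S : GammaPlus) (m : ℕ) : ((Fin m → Bset S) × Bset S) ≃ (Fin (m+1) → Bset S) :=
  (Equiv.prodComm _ _).trans (Fin.consEquiv (fun _ => Bset S))

/-- `T^{⊗m}(S)` is the free abelian group on tuples. -/
noncomputable def tequiv (S : GammaPlus) : ∀ m, (tpowGrp S m : Type) ≃+ ((Fin m → Bset S) →₀ ℤ)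
  | 0 => (Finsupp.LinearEquiv.finsuppUnique ℤ ℤ (Fin 0 → Bset S)).symm.toAddEquiv
  | (m+1) =>
      ((TensorProduct.congr (tequiv S m).toIntLinearEquiv
          (FreeAbelianGroup.equivFinsupp (Bset S)).toIntLinearEquiv).trans
        ((finsuppTensorFinsupp' ℤ (Fin m → Bset S) (Bset S)).trans
          (Finsupp.domCongr (tupEquiv S m)).toIntLinearEquiv)).toAddEquiv

theorem tequiv_elem (S : GammaPlus) : ∀ m (t : Fin m → Bset S),
    tequiv S m (elem S m t) = Finsupp.single t 1
  | 0, t => by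
    show (Finsupp.LinearEquiv.finsuppUnique ℤ ℤ (Fin 0 → Bset S)).symm (1 : ℤ) = _
    rw [LinearEquiv.symm_apply_eq, Subsingleton.elim t default]
    simp [Finsupp.LinearEquiv.finsuppUnique]
  | (m+1), t => by
    show ((Finsupp.domCongr (tupEquiv S m)).toIntLinearEquiv :
        ((Fin m → Bset S) × Bset S →₀ ℤ) ≃ₗ[ℤ] ((Fin (m + 1) → Bset S) →₀ ℤ))
        ((finsuppTensorFinsupp' ℤ _ _)
          ((TensorProduct.congr (tequiv S m).toIntLinearEquiv
            (FreeAbelianGroup.equivFinsupp (Bset S)).toIntLinearEquiv)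
            ((elem S m (fun j => t j.succ)) ⊗ₜ (FreeAbelianGroup.of (t 0))))) = _
    rw [TensorProduct.congr_tmul]
    have h1 : ((tequiv S m).toIntLinearEquiv : (tpowGrp S m : Type) ≃ₗ[ℤ] ((Fin m → Bset S) →₀ ℤ))
        (elem S m (fun j => t j.succ)) =
        Finsupp.single (fun j => t j.succ) 1 := tequiv_elem S m _
    have h2 : ((FreeAbelianGroup.equivFinsupp (Bset S)).toIntLinearEquiv :
        FreeAbelianGroup (Bset S) ≃ₗ[ℤ] (Bset S →₀ ℤ))
        (FreeAbelianGroup.of (t 0)) = Finsupp.single (t 0) 1 := by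
      show FreeAbelianGroup.equivFinsupp (Bset S) (FreeAbelianGroup.of (t 0)) = _
      simp [FreeAbelianGroup.equivFinsupp]
    rw [h1, h2, finsuppTensorFinsupp'_single_tmul_single]
    show Finsupp.domCongr (tupEquiv S m) _ = _
    rw [Finsupp.domCongr_apply, Finsupp.equivMapDomain_single]
    congr 1
    funext j
    refine Fin.cases ?_ (fun j => ?_) j <;> rfl

/-- Homomorphisms out of `T^{⊗m}(S)` are determined by values on generators. -/
theorem tpow_hom_ext {S : GammaPlus} {m : ℕ} {A : Type} [AddCommGroup A]
    (φ ψ : (tpowGrp S m : Type) →+ A)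
    (h : ∀ t : Fin m → Bset S, φ (elem S m t) = ψ (elem S m t)) : φ = ψ := by
  have key : φ.comp (tequiv S m).symm.toAddMonoidHom =
      ψ.comp (tequiv S m).symm.toAddMonoidHom := by
    apply Finsupp.addHom_ext
    intro t k
    have hs : Finsupp.single t k = k • Finsupp.single t (1 : ℤ) := by
      rw [Finsupp.smul_single]; norm_num
    have he : (tequiv S m).symm (Finsupp.single t (1:ℤ)) = elem S m t := by
      rw [AddEquiv.symm_apply_eq, tequiv_elem]
    simp only [AddMonoidHom.comp_apply, AddEquiv.coe_toAddMonoidHom, hs, map_zsmul, he, h t]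
  ext x
  have := DFunLike.congr_fun key (tequiv S m x)
  simpa using this

theorem push_elem {S S' : GammaPlus} (f : S ⟶ S') : ∀ (m : ℕ) (t : Fin m → Bset S),
    tpowMap f m (elem S m t) =
      if h : ∀ j, f.hom.toFun (t j).val ≠ S'.obj.point then
        elem S' m (fun j => ⟨f.hom.toFun (t j).val, h j⟩) else 0
  | 0, t => by
    rw [dif_pos (fun j => j.elim0)]; rfl
  | (m+1), t => by
    show (TensorProduct.map (tpowMap f m).toIntLinearMap (TMap f).toIntLinearMap)
        ((elem S m (fun j => t j.succ)) ⊗ₜ (FreeAbelianGroup.of (t 0))) = _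
    rw [TensorProduct.map_tmul]
    have hT : (TMap f).toIntLinearMap (FreeAbelianGroup.of (t 0)) =
        if h : f.hom.toFun (t 0).val = S'.obj.point then 0
        else FreeAbelianGroup.of ⟨f.hom.toFun (t 0).val, h⟩ := by
      show TMap f (FreeAbelianGroup.of (t 0)) = _
      simp [TMap]
    have hP : (tpowMap f m).toIntLinearMap (elem S m (fun j => t j.succ)) =
        if h : ∀ j : Fin m, f.hom.toFun ((t j.succ)).val ≠ S'.obj.point then
          elem S' m (fun j => ⟨f.hom.toFun (t j.succ).val, h j⟩) else 0 :=
      push_elem f m _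
    rw [hT, hP]
    by_cases h0 : f.hom.toFun (t 0).val = S'.obj.point
    · rw [dif_pos h0, TensorProduct.tmul_zero, dif_neg]
      rfl
      intro hall
      exact hall 0 h0
    · rw [dif_neg h0]
      by_cases hs : ∀ j : Fin m, f.hom.toFun ((t j.succ)).val ≠ S'.obj.point
      · rw [dif_pos hs]
        have hall : ∀ j : Fin (m+1), f.hom.toFun (t j).val ≠ S'.obj.point := fun j => by
          refine Fin.cases h0 hs j
        rw [dif_pos hall]
        rfl
      · rw [dif_neg hs, dif_neg (fun hall => hs (fun j => hall j.succ)),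
          TensorProduct.zero_tmul]
        rfl

/-- The standard pointed set with `n` non-basepoint elements. -/
abbrev stdObj (n : ℕ) : GammaPlus :=
  ⟨⟨Option (Fin n), none⟩, Finite.of_fintype _⟩

instance (n : ℕ) : Finite ((stdObj n).obj.X) := (stdObj n).property

/-- The map collapsing the `i`-th element to the basepoint. -/
noncomputable def collapse {n : ℕ} (i : Fin n) : stdObj n ⟶ stdObj n :=
  ⟨⟨fun o => if o = some i then none else o, by simp [stdObj]⟩⟩

theorem collapse_toFun {n : ℕ} (i : Fin n) (o : Option (Fin n)) :
    (collapse i).hom.toFun o = if o = some i then none else o := by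
  by_cases h : o = some i
  · rw [if_pos h]; exact if_pos h
  · rw [if_neg h]; exact if_neg h

/-- An element of `T^{⊗m}` of the standard `n`-element object killed by all collapses
is zero, provided `m < n`. -/
theorem zero_of_collapse {n m : ℕ} (hmn : m < n) (x : tpowGrp (stdObj n) m)
    (hx : ∀ i : Fin n, tpowMap (collapse i) m x = 0) : x = 0 := by
  have hcoeff : ∀ t : Fin m → Bset (stdObj n), tequiv (stdObj n) m x t = 0 := by
    intro t
    -- each component of `t` is `some (idx j)`
    have hsome : ∀ j, ∃ i : Fin n, (t j).val = some i := fun j => by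
      rcases ht : (t j).val with _ | i
      · exact absurd ht (t j).2
      · exact ⟨i, rfl⟩
    choose idx hidx using hsome
    -- pigeonhole: some `i` is avoided by `t`
    have hns : ¬ Function.Surjective idx := fun hs => by
      have := Fintype.card_le_of_surjective idx hs
      simp at this
      omega
    rw [Function.Surjective] at hns
    push_neg at hns
    obtain ⟨i, hi⟩ := hns
    -- the coefficient functional
    set φ : (tpowGrp (stdObj n) m : Type) →+ ℤ :=
      (Finsupp.applyAddHom t).comp (tequiv (stdObj n) m).toAddMonoidHom with hφ
    have hkey : φ.comp (tpowMap (collapse i) m) = φ := by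
      apply tpow_hom_ext
      intro t'
      simp only [AddMonoidHom.comp_apply]
      rw [push_elem]
      by_cases hc : ∀ j, (collapse i).hom.toFun ((t' j)).val ≠ (stdObj n).obj.point
      · rw [dif_pos hc]
        have htup : (fun j => (⟨(collapse i).hom.toFun (t' j).val, hc j⟩ :
            Bset (stdObj n))) = t' := by
          funext j
          apply Subtype.ext
          show (collapse i).hom.toFun (t' j).val = (t' j).val
          rw [collapse_toFun, if_neg]
          intro hj
          exact hc j (by rw [collapse_toFun, if_pos hj])
        rw [htup]
      · rw [dif_neg hc, map_zero]
        push_neg at hc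
        obtain ⟨j, hj⟩ := hc
        -- t' j = some i, hence t' ≠ t
        have ht'j : (t' j).val = some i := by
          by_contra hne
          rw [collapse_toFun, if_neg hne] at hj
          exact (t' j).2 hj
        have htne : t' ≠ t := fun he => by
          apply hi j
          have h2 := hidx j
          rw [← he] at h2
          exact Option.some_injective _ (h2.symm.trans ht'j)
        symm
        calc φ (elem (stdObj n) m t') = Finsupp.single t' 1 t := by
              rw [hφ]; simp [tequiv_elem]
          _ = 0 := Finsupp.single_eq_of_ne htne.symm
    have := DFunLike.congr_fun hkey x
    simp only [AddMonoidHom.comp_apply, hx i, map_zero] at this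
    rw [hφ] at this
    exact this.symm
  have : tequiv (stdObj n) m x = 0 := Finsupp.ext hcoeff
  exact (map_eq_zero_iff _ (AddEquiv.injective _)).mp this

/-- The generic tuple in the standard object. -/
def gtup (n : ℕ) : Fin n → Bset (stdObj n) :=
  fun j => ⟨some j, Option.some_ne_none j⟩

theorem eta_gtup_zero {n m : ℕ} (hmn : m < n) (η : tpow n ⟶ tpow m) :
    η.app (stdObj n) (elem (stdObj n) n (gtup n)) = 0 := by
  apply zero_of_collapse hmn
  intro i
  have h1 : ((tpow n).map (collapse i) ≫ η.app (stdObj n)) (elem (stdObj n) n (gtup n)) =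
      (η.app (stdObj n) ≫ (tpow m).map (collapse i)) (elem (stdObj n) n (gtup n)) := by
    rw [η.naturality (collapse i)]
  erw [CategoryTheory.comp_apply, CategoryTheory.comp_apply] at h1
  have hE : tpowMap (collapse i) n (elem (stdObj n) n (gtup n)) = 0 := by
    rw [push_elem, dif_neg]
    intro hall
    apply hall i
    show (collapse i).hom.toFun (some i) = none
    rw [collapse_toFun, if_pos rfl]
  have h2 : η.app (stdObj n) (((tpow n).map (collapse i)) (elem (stdObj n) n (gtup n))) = 0 := by
    show η.app (stdObj n) (tpowMap (collapse i) n (elem (stdObj n) n (gtup n))) = 0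
    rw [hE]; exact map_zero _
  exact h1.symm.trans h2

theorem part_a {n m : ℕ} (hmn : m < n) (η : tpow n ⟶ tpow m) : η = 0 := by
  ext S : 2
  apply AddCommGrpCat.hom_ext
  apply tpow_hom_ext (η.app S).hom
  intro t
  have hz : (NatTrans.app (0 : tpow n ⟶ tpow m) S) (elem S n t) = 0 := by
    simp
    rfl
  refine Eq.trans ?_ hz.symm
  let g : stdObj n ⟶ S := ⟨⟨fun o => Option.elim o S.obj.point (fun j => (t j).val), rfl⟩⟩
  have hg : tpowMap g n (elem (stdObj n) n (gtup n)) = elem S n t := by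
    rw [push_elem, dif_pos (show ∀ j : Fin n, g.hom.toFun ((gtup n j)).val ≠ S.obj.point from
      fun j => (t j).2)]
    rfl
  have h1 : ((tpow n).map g ≫ η.app S) (elem (stdObj n) n (gtup n)) =
      (η.app (stdObj n) ≫ (tpow m).map g) (elem (stdObj n) n (gtup n)) := by
    rw [η.naturality g]
  erw [CategoryTheory.comp_apply, CategoryTheory.comp_apply] at h1
  calc η.app S (elem S n t)
      = η.app S (((tpow n).map g) (elem (stdObj n) n (gtup n))) := by
        show _ = η.app S (tpowMap g n (elem (stdObj n) n (gtup n)))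
        rw [hg]
    _ = ((tpow m).map g) ((η.app (stdObj n)) (elem (stdObj n) n (gtup n))) := h1
    _ = 0 := by rw [eta_gtup_zero hmn, map_zero]

theorem TObj_stdZero_eq_zero (x : TObj (stdObj 0)) : x = 0 := by
  have h : (AddMonoidHom.id (TObj (stdObj 0))) = 0 := by
    refine FreeAbelianGroup.lift_ext _ _ ?_
    rintro ⟨_ | j, hs⟩
    · exact absurd rfl hs
    · exact j.elim0
  calc x = AddMonoidHom.id (TObj (stdObj 0)) x := rfl
    _ = (0 : TObj (stdObj 0) →+ TObj (stdObj 0)) x := by rw [h]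
    _ = 0 := rfl

theorem tpow_stdZero_eq_zero : ∀ (k : ℕ) (x : tpowGrp (stdObj 0) (k+1)), x = 0 := by
  intro k x
  show x = 0
  refine TensorProduct.induction_on x rfl (fun a b => ?_)
    (fun a b ha hb => by rw [ha, hb]; exact add_zero _)
  rw [TObj_stdZero_eq_zero b, TensorProduct.tmul_zero]
  rfl

theorem part_b {n : ℕ} (hn : 1 ≤ n) (η : tpow 0 ⟶ tpow n) : η = 0 := by
  obtain ⟨k, rfl⟩ : ∃ k, n = k + 1 := ⟨n - 1, by omega⟩
  ext S : 2
  apply AddCommGrpCat.hom_ext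
  apply tpow_hom_ext (η.app S).hom
  intro t
  have hz : (NatTrans.app (0 : tpow 0 ⟶ tpow (k+1)) S) (elem S 0 t) = 0 := by simp; rfl
  refine Eq.trans ?_ hz.symm
  let g : stdObj 0 ⟶ S := ⟨⟨fun _ => S.obj.point, rfl⟩⟩
  have h1 : ((tpow 0).map g ≫ η.app S) (elem (stdObj 0) 0 (fun j => j.elim0)) =
      (η.app (stdObj 0) ≫ (tpow (k+1)).map g) (elem (stdObj 0) 0 (fun j => j.elim0)) := by
    rw [η.naturality g]
  erw [CategoryTheory.comp_apply, CategoryTheory.comp_apply] at h1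
  calc η.app S (elem S 0 t)
      = η.app S (((tpow 0).map g) (elem (stdObj 0) 0 (fun j => j.elim0))) := rfl
    _ = ((tpow (k+1)).map g) ((η.app (stdObj 0)) (elem (stdObj 0) 0 (fun j => j.elim0))) := h1
    _ = 0 := by
        rw [tpow_stdZero_eq_zero k ((η.app (stdObj 0)) (elem (stdObj 0) 0 fun j => j.elim0))]
        exact map_zero _

theorem smul_id_app (k : ℤ) (S : GammaPlus) (x : TObj S) :
    ((k • 𝟙 TFunctor).app S) x = k • x := by
  rw [NatTrans.app_zsmul, NatTrans.id_app]
  rfl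

/-- The distinguished generator of `T(stdObj 1)`. -/
def b1 : Bset (stdObj 1) := ⟨some 0, Option.some_ne_none 0⟩

/-- The coefficient-sum functional. -/
noncomputable def ellT (S : GammaPlus) : TObj S →+ ℤ :=
  FreeAbelianGroup.lift (fun _ => (1 : ℤ))

theorem Bset_stdOne_eq (s : Bset (stdObj 1)) : s = b1 := by
  apply Subtype.ext
  rcases hs : s.val with _ | j
  · exact absurd hs s.2
  · show some j = some 0
    rw [Subsingleton.elim j 0]

theorem free_stdOne (x : TObj (stdObj 1)) :
    x = (ellT (stdObj 1) x) • FreeAbelianGroup.of b1 := by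
  have h : ((zmultiplesHom (TObj (stdObj 1))) (FreeAbelianGroup.of b1)).comp (ellT (stdObj 1)) =
      AddMonoidHom.id (TObj (stdObj 1)) := by
    refine FreeAbelianGroup.lift_ext _ _ ?_
    intro s
    simp only [AddMonoidHom.comp_apply, AddMonoidHom.id_apply, ellT, FreeAbelianGroup.lift_apply_of]
    rw [Bset_stdOne_eq s]
    show (1 : ℤ) • FreeAbelianGroup.of b1 = FreeAbelianGroup.of b1
    rw [one_smul]
  calc x = AddMonoidHom.id (TObj (stdObj 1)) x := rfl
    _ = ((zmultiplesHom (TObj (stdObj 1))) (FreeAbelianGroup.of b1)).comp (ellT (stdObj 1)) x := by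
        rw [h]
    _ = (ellT (stdObj 1) x) • FreeAbelianGroup.of b1 := rfl

theorem part_c (η : TFunctor ⟶ TFunctor) : ∃! k : ℤ, η = k • 𝟙 TFunctor := by
  set k := ellT (stdObj 1) (η.app (stdObj 1) (FreeAbelianGroup.of b1)) with hk
  have hstd : η.app (stdObj 1) (FreeAbelianGroup.of b1) = k • FreeAbelianGroup.of b1 :=
    free_stdOne _
  refine ⟨k, ?_, ?_⟩
  · ext S : 2
    apply AddCommGrpCat.hom_ext
    show (η.app S).hom = ((k • 𝟙 TFunctor).app S).hom
    refine FreeAbelianGroup.lift_ext _ _ ?_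
    intro s
    refine Eq.trans ?_ (smul_id_app k S (FreeAbelianGroup.of s)).symm
    let g : stdObj 1 ⟶ S := ⟨⟨fun o => Option.elim o S.obj.point (fun _ => s.val), rfl⟩⟩
    have hg : TMap g (FreeAbelianGroup.of b1) = FreeAbelianGroup.of s := by
      show FreeAbelianGroup.lift _ (FreeAbelianGroup.of b1) = _
      rw [FreeAbelianGroup.lift_apply_of,
        dif_neg (show ¬(g.hom.toFun b1.val = S.obj.point) from s.2)]
      rfl
    have h1 : (TFunctor.map g ≫ η.app S) (FreeAbelianGroup.of b1) =
        (η.app (stdObj 1) ≫ TFunctor.map g) (FreeAbelianGroup.of b1) := by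
      rw [η.naturality g]
    erw [CategoryTheory.comp_apply, CategoryTheory.comp_apply] at h1
    have h3 : (TFunctor.map g) (η.app (stdObj 1) (FreeAbelianGroup.of b1)) =
        k • FreeAbelianGroup.of s := by
      show TMap g _ = _
      rw [hstd, map_zsmul, hg]
    have h0 : η.app S (FreeAbelianGroup.of s) =
        η.app S ((TFunctor.map g) (FreeAbelianGroup.of b1)) := by
      show _ = η.app S (TMap g (FreeAbelianGroup.of b1))
      rw [hg]
    exact h0.trans (h1.trans h3)
  · intro k' hk'
    have h1 : η.app (stdObj 1) (FreeAbelianGroup.of b1) = k' • FreeAbelianGroup.of b1 := by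
      rw [hk']
      exact smul_id_app k' (stdObj 1) _
    have h2 : ellT (stdObj 1) ((k' : ℤ) • FreeAbelianGroup.of b1) = k' := by
      rw [map_zsmul, ellT, FreeAbelianGroup.lift_apply_of, smul_eq_mul, mul_one]
    rw [hk, h1, h2]

theorem stmt11 :
    -- (a) for all `n > m ≥ 0`, every natural transformation `T^{⊗n} ⟹ T^{⊗m}` is zero:
    (∀ n m : ℕ, m < n → ∀ η : tpow n ⟶ tpow m, η = 0) ∧
    -- (b) for every `n ≥ 1`, every natural transformation `T^{⊗0} ⟹ T^{⊗n}` is zero: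
    (∀ n : ℕ, 1 ≤ n → ∀ η : tpow 0 ⟶ tpow n, η = 0) ∧
    -- (c) every natural endomorphism of `T` is multiplication by a unique integer:
    (∀ η : TFunctor ⟶ TFunctor, ∃! k : ℤ, η = k • 𝟙 TFunctor) :=
  ⟨fun _ _ h η => part_a h η, fun _ h η => part_b h η, part_c⟩
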